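/- (Rank bound for extended Hankel matrix) Let Z = [z_1,…,z_p] where each z_i = f ⊛ h̄_i for filters h_i ∈ ℝ^m with m ≤ n. Then the extended Hankel matrix H_{d|p}(Z) = [H_d(z_1) … H_d(z_p)] factors as H_n(f)·[C_d(h_1) … C_d(h_p)], and consequently rank H_{d|p}(Z) ≤ min{rank H_n(f), p·d}. -/

import Mathlib

open Matrix BigOperators Finset

noncomputable section

/-- Zero-padding of a length-`d` filter to a signal on `ZMod n`. -/
def zpad {n d : ℕ} [NeZero n] (ψ : Fin d → ℝ) : ZMod n → ℝ :=
  fun k => if h : (ZMod.val k) < d then ψ ⟨ZMod.val k, h⟩ else 0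

/-- Circular convolution of two signals on `ZMod n`. -/
def cconv {n : ℕ} [NeZero n] (f g : ZMod n → ℝ) : ZMod n → ℝ :=
  fun k => ∑ l : ZMod n, f l * g (k - l)

/-- Index flip of a signal on `ZMod n`. -/
def cflip {n : ℕ} (g : ZMod n → ℝ) : ZMod n → ℝ := fun k => g (-k)

/-- Wrap-around Hankel matrix `H_d(f)` of `f : ZMod n → ℝ`. -/
def hankel {n : ℕ} (d : ℕ) (f : ZMod n → ℝ) : Matrix (ZMod n) (Fin d) ℝ :=
  Matrix.of fun i j => f (i + ((j : ℕ) : ZMod n))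

/-- Frobenius (trace) inner product of two matrices. -/
def frobInner {I J : Type*} [Fintype I] [Fintype J] (A B : Matrix I J ℝ) : ℝ :=
  ∑ i, ∑ j, A i j * B i j

/-- Orthonormal Hankel basis element `E_k = (1/√d) H_d(e_k)`. -/
def hankE {n : ℕ} [NeZero n] (d : ℕ) (k : ZMod n) : Matrix (ZMod n) (Fin d) ℝ :=
  (Real.sqrt d)⁻¹ • hankel d (Pi.single k 1)

/-- Generalized (left) inverse of the Hankel lifting. -/
def hdag {n d : ℕ} [NeZero n] (B : Matrix (ZMod n) (Fin d) ℝ) : ZMod n → ℝ :=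
  fun k => (Real.sqrt d)⁻¹ * frobInner (hankE d k) B

/-- Extended Hankel matrix `H_{d|p}(Z)` of a `p`-channel signal. -/
def hankelExt {n : ℕ} (d p : ℕ) (Z : Matrix (ZMod n) (Fin p) ℝ) :
    Matrix (ZMod n) (Fin p × Fin d) ℝ :=
  Matrix.of fun i cj => Z (i + ((cj.2 : ℕ) : ZMod n)) cj.1

/-- Generalized (left) inverse of the extended Hankel lifting. -/
def hdagExt {n d p : ℕ} [NeZero n] (Y : Matrix (ZMod n) (Fin p × Fin d) ℝ) :
    Matrix (ZMod n) (Fin p) ℝ :=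
  Matrix.of fun k c => hdag (Matrix.of fun i j => Y i (c, j)) k

/-- Entrywise ReLU on matrices. -/
def reluM {I J : Type*} (A : Matrix I J ℝ) : Matrix I J ℝ :=
  Matrix.of fun i j => max 0 (A i j)

/-- Square wrap-around Hankel matrix `H_n(f)`. -/
def hankelSq {n : ℕ} (f : ZMod n → ℝ) : Matrix (ZMod n) (ZMod n) ℝ :=
  Matrix.of fun i j => f (i + j)

/-- Side-by-side circulant-type matrices `[C_d(h_1) … C_d(h_p)]`. -/
def circBlocks {n : ℕ} [NeZero n] (d p : ℕ) (h : Fin p → Fin m → ℝ) :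
    Matrix (ZMod n) (Fin p × Fin d) ℝ :=
  Matrix.of fun l cj => zpad (h cj.1) (l - ((cj.2 : ℕ) : ZMod n))

/-- rank bound for the extended Hankel matrix: if each channel
is `z_i = f ⊛ h̄_i`, then `H_{d|p}(Z) = H_n(f)·[C_d(h_1) … C_d(h_p)]` and
`rank H_{d|p}(Z) ≤ min{rank H_n(f), p·d}`. -/
theorem extended_hankel_rank_bound {n d p m : ℕ} [NeZero n] (hm : m ≤ n)
    (f : ZMod n → ℝ) (h : Fin p → Fin m → ℝ)
    (Z : Matrix (ZMod n) (Fin p) ℝ)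
    (hZ : ∀ (c : Fin p) (k : ZMod n), Z k c = cconv f (cflip (zpad (h c))) k) :
    hankelExt d p Z = hankelSq f * circBlocks d p h ∧
    (hankelExt d p Z).rank ≤ min (hankelSq f).rank (p * d) := by
  have key : hankelExt d p Z = hankelSq f * circBlocks d p h := by
    ext i cj
    change _ = ∑ l, hankelSq f i l * circBlocks d p h l cj
    simp only [hankelExt, hankelSq, circBlocks, Matrix.mul_apply, Matrix.of_apply, hZ,
      cconv, cflip]
    rw [← Equiv.sum_comp (Equiv.subRight i) (fun l => f (i + l) * zpad (h cj.1) (l - _))]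
    apply Finset.sum_congr rfl
    intro l _
    simp only [Equiv.subRight_apply]
    congr 1
    · congr 1; ring
    · congr 1; ring
  refine ⟨key, le_min ?_ ?_⟩
  · rw [key]; exact Matrix.rank_mul_le_left _ _
  · calc (hankelExt d p Z).rank ≤ Fintype.card (Fin p × Fin d) := Matrix.rank_le_card_width _
      _ = p * d := by simp
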